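/- Let p be a prime with p ∉ {2, 3, 7, 43}. If none of the eight integers 1 + 2p, 1 + 6p, 1 + 14p, 1 + 42p, 1 + 86p, 1 + 258p, 1 + 602p, 1 + 1806p is prime, then M_p ⊆ {1, 2, 6, 42, 1806} ∪ p · {1, 2, 6, 42, 1806}; in particular M_p is finite. -/

import Mathlib

set_option maxRecDepth 10000

/-- `S k n = ∑_{i=1}^{n} i^k`. -/
def S (k n : ℕ) : ℕ := ∑ i ∈ Finset.Icc 1 n, i ^ k

namespace Stmt12Aux

open Finset

/-! ### Decidable facts about the chain `1, 2, 6, 42, 1806` -/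

lemma d1806 : (1806:ℕ).divisors = {1,2,3,6,7,14,21,42,43,86,129,258,301,602,903,1806} := by
  decide

lemma DEC1' : ∀ q ∈ ({2,3,7,43} : Finset ℕ), ∀ x ∈ ({1,2,6,42,1806} : Finset ℕ),
    (q - 1) ∣ x → ¬ q ∣ x → q * x ∈ ({1,2,6,42,1806} : Finset ℕ) := by decide

lemma DEC2' : ∀ b ∈ ({1,2,3,6,7,14,21,42,43,86,129,258,301,602,903,1806} : Finset ℕ), 2 ∣ b →
    b ∈ ({2, 6, 14, 42, 86, 258, 602, 1806} : Finset ℕ) := by decide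

lemma M1dvd : ∀ x ∈ ({1,2,6,42,1806} : Finset ℕ), x ∣ 1806 := by decide

lemma mem_d1806 {d x : ℕ} (hx : x ∈ ({1,2,6,42,1806} : Finset ℕ)) (hd : d ∣ x) :
    d ∈ ({1,2,3,6,7,14,21,42,43,86,129,258,301,602,903,1806} : Finset ℕ) := by
  rw [← d1806]
  exact Nat.mem_divisors.mpr ⟨hd.trans (M1dvd x hx), by norm_num⟩

lemma prime_of_sub_one_mem {q : ℕ} (hq : q.Prime)
    (h : q - 1 ∈ ({1,2,3,6,7,14,21,42,43,86,129,258,301,602,903,1806} : Finset ℕ)) :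
    q ∈ ({2,3,7,43} : Finset ℕ) := by
  have h2 := hq.two_le
  have hd : q - 1 = 1 ∨ q - 1 = 2 ∨ q - 1 = 3 ∨ q - 1 = 6 ∨ q - 1 = 7 ∨ q - 1 = 14 ∨
      q - 1 = 21 ∨ q - 1 = 42 ∨ q - 1 = 43 ∨ q - 1 = 86 ∨ q - 1 = 129 ∨ q - 1 = 258 ∨
      q - 1 = 301 ∨ q - 1 = 602 ∨ q - 1 = 903 ∨ q - 1 = 1806 := by simpa using h
  have hmem : q = 2 ∨ q = 3 ∨ q = 7 ∨ q = 43 := by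
    rcases hd with h1|h1|h1|h1|h1|h1|h1|h1|h1|h1|h1|h1|h1|h1|h1|h1 <;>
      first
        | (left; omega)
        | (right; left; omega)
        | (right; right; left; omega)
        | (right; right; right; omega)
        | (exfalso; rw [show q = (q - 1) + 1 from by omega, h1] at hq; norm_num at hq)
  simpa using hmem

/-! ### The combinatorial chain lemma -/

lemma chain {p : ℕ} (hp : p.Prime) (hp2 : p ≠ 2)
    (hnp : ∀ k ∈ ({2, 6, 14, 42, 86, 258, 602, 1806} : Finset ℕ), ¬ Nat.Prime (1 + k * p)) :
    ∀ m, 0 < m → Squarefree m → ¬ p ∣ m →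
      (∀ q, q.Prime → q ∣ m → (q - 1) ∣ p * m) → m ∈ ({1,2,6,42,1806} : Finset ℕ) := by
  intro m
  induction m using Nat.strong_induction_on with
  | _ m IH =>
    intro hm0 hsq hpm hq
    by_cases hm1 : m = 1
    · subst hm1; decide
    have hm2 : 2 ≤ m := by omega
    have hne : m.primeFactors.Nonempty := Nat.nonempty_primeFactors.mpr (by omega)
    set q := m.primeFactors.max' hne with hqdef
    have hqmem := m.primeFactors.max'_mem hne
    have hqp : q.Prime := (Nat.mem_primeFactors.mp hqmem).1
    have hqdvd : q ∣ m := (Nat.mem_primeFactors.mp hqmem).2.1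
    obtain ⟨m', hm'⟩ := hqdvd
    have hq2 := hqp.two_le
    have hm'0 : 0 < m' := by
      rcases Nat.eq_zero_or_pos m' with h | h
      · subst h; omega
      · exact h
    have hm'dvd : m' ∣ m := ⟨q, by rw [hm']; ring⟩
    have hqm' : ¬ q ∣ m' := by
      rintro ⟨t, rfl⟩
      have : q * q ∣ m := ⟨t, by rw [hm']; ring⟩
      have := Nat.isUnit_iff.mp (hsq q this)
      omega
    have hmax : ∀ r, r.Prime → r ∣ m' → r < q := by
      intro r hr hrd
      have hmem : r ∈ m.primeFactors :=
        Nat.mem_primeFactors.mpr ⟨hr, hrd.trans hm'dvd, by omega⟩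
      have hle := Finset.le_max' _ r hmem
      rw [← hqdef] at hle
      rcases lt_or_eq_of_le hle with h | h
      · exact h
      · exact absurd (h ▸ hrd) hqm'
    have hm'lt : m' < m := by
      rw [hm']
      calc m' = 1 * m' := (one_mul m').symm
      _ < q * m' := by
        apply Nat.mul_lt_mul_of_lt_of_le (by omega) le_rfl (by omega)
    have hsq' : Squarefree m' := hsq.squarefree_of_dvd hm'dvd
    have hpm' : ¬ p ∣ m' := fun h => hpm (h.trans hm'dvd)
    have hstep : ∀ r, r.Prime → r ∣ m' → (r - 1) ∣ p * m' := by
      intro r hr hrd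
      have h1 : (r - 1) ∣ p * m := hq r hr (hrd.trans hm'dvd)
      have hr2 := hr.two_le
      have h2 : ¬ q ∣ (r - 1) := by
        intro hcon
        have hb := Nat.le_of_dvd (by omega) hcon
        have := hmax r hr hrd
        omega
      have hcop : (r - 1).Coprime q := ((hqp.coprime_iff_not_dvd).mpr h2).symm
      have h3 : (r - 1) ∣ q * (p * m') := by
        have he : p * m = q * (p * m') := by rw [hm']; ring
        rwa [he] at h1
      exact hcop.dvd_of_dvd_mul_left h3
    have hm'M := IH m' hm'lt hm'0 hsq' hpm' hstep
    have hq1 : (q - 1) ∣ p * m' := by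
      have h1 : (q - 1) ∣ p * m := hq q hqp ⟨m', hm'⟩
      have h2 : ¬ q ∣ (q - 1) := by
        intro hcon
        have := Nat.le_of_dvd (by omega) hcon
        omega
      have hcop : (q - 1).Coprime q := ((hqp.coprime_iff_not_dvd).mpr h2).symm
      have h3 : (q - 1) ∣ q * (p * m') := by
        have he : p * m = q * (p * m') := by rw [hm']; ring
        rwa [he] at h1
      exact hcop.dvd_of_dvd_mul_left h3
    obtain ⟨a, b, ha, hb, hab⟩ := Nat.dvd_mul.mp hq1
    rcases (Nat.Prime.eq_one_or_self_of_dvd hp a ha) with ha1 | hap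
    · -- `q - 1 = b ∣ m'`
      have hqb : (q - 1) ∣ m' := by
        rw [ha1, one_mul] at hab
        exact hab ▸ hb
      have hq4 : q ∈ ({2,3,7,43} : Finset ℕ) :=
        prime_of_sub_one_mem hqp (mem_d1806 hm'M hqb)
      have := DEC1' q hq4 m' hm'M hqb hqm'
      rw [hm']
      exact this
    · -- `q - 1 = p * b`, contradiction with `hnp`
      subst hap
      have hqpb : q - 1 = a * b := hab.symm
      have hq3 : q ≠ 2 := by
        intro hq2e
        have hb1 : a * b = 1 := by omega
        have := Nat.eq_one_of_mul_eq_one_right hb1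
        have h2 := hp.two_le
        omega
      have h2q1 : 2 ∣ q - 1 := by
        have : ¬ 2 ∣ q := fun h =>
          hq3 (((Nat.prime_dvd_prime_iff_eq Nat.prime_two hqp).mp h).symm)
        omega
      have h2b : 2 ∣ b := by
        rcases (Nat.Prime.dvd_mul Nat.prime_two).mp (hqpb ▸ h2q1) with h | h
        · exact absurd ((Nat.prime_dvd_prime_iff_eq Nat.prime_two hp).mp h).symm hp2
        · exact h
      have hb8 := DEC2' b (mem_d1806 hm'M hb) h2b
      exfalso
      refine hnp b hb8 ?_
      have : 1 + b * a = q := by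
        have := hq2
        rw [mul_comm b a]
        omega
      rw [this]
      exact hqp

/-! ### Modular computation of `S n n` -/

lemma sum_range_zmod {Q : ℕ} [NeZero Q] (g : ZMod Q → ZMod Q) :
    ∑ i ∈ Finset.range Q, g (i : ZMod Q) = ∑ x : ZMod Q, g x := by
  refine Finset.sum_nbij' (fun i => (i : ZMod Q)) (fun x => x.val) ?_ ?_ ?_ ?_ ?_
  · intro a _; exact Finset.mem_univ _
  · intro x _; exact Finset.mem_range.mpr x.val_lt
  · intro a ha; exact ZMod.val_cast_of_lt (Finset.mem_range.mp ha)
  · intro x _; exact ZMod.natCast_rightInverse x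
  · intro a _; rfl

lemma sum_blocks {Q n : ℕ} (c : ℕ) :
    ∑ i ∈ Finset.range (c * Q), ((i : ZMod Q)) ^ n
      = (c : ZMod Q) * ∑ i ∈ Finset.range Q, ((i : ZMod Q)) ^ n := by
  induction c with
  | zero => simp
  | succ c ih =>
    have h1 : (c + 1) * Q = c * Q + Q := by ring
    rw [h1, Finset.range_eq_Ico,
      ← Finset.sum_Ico_consecutive _ (Nat.zero_le (c * Q)) (Nat.le_add_right _ _),
      ← Finset.range_eq_Ico, ih, Finset.sum_Ico_eq_sum_range, Nat.add_sub_cancel_left]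
    have h2 : ∀ i ∈ Finset.range Q,
        (((c * Q + i : ℕ) : ZMod Q)) ^ n = ((i : ZMod Q)) ^ n := by
      intro i _
      push_cast
      simp [ZMod.natCast_self]
    rw [Finset.sum_congr rfl h2]
    push_cast
    ring

lemma core {p n q e : ℕ} [NeZero (q ^ e)] (hn : 0 < n) (he : e = n.factorization q)
    (hmod : S n n ≡ p [MOD n]) :
    (p : ZMod (q ^ e))
      = ((n / q ^ e : ℕ) : ZMod (q ^ e)) * ∑ x : ZMod (q ^ e), x ^ n := by
  set Q := q ^ e with hQ
  have hQn : Q ∣ n := by rw [hQ, he]; exact Nat.ordProj_dvd n q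
  have h1 : (S n n : ZMod Q) = (p : ZMod Q) :=
    (ZMod.natCast_eq_natCast_iff _ _ _).mpr (hmod.of_dvd hQn)
  rw [← h1]
  have h2 : (S n n : ZMod Q) = ∑ i ∈ Finset.Icc 1 n, ((i : ZMod Q)) ^ n := by
    unfold S; push_cast; rfl
  have h3 : Finset.Icc 1 n = Finset.Ico 1 (n + 1) := by rw [Finset.Ico_add_one_right_eq_Icc]
  have h4 : ∑ i ∈ Finset.Ico 0 (n+1), ((i : ZMod Q)) ^ n
      = ((0:ℕ) : ZMod Q) ^ n + ∑ i ∈ Finset.Ico 1 (n+1), ((i : ZMod Q)) ^ n :=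
    Finset.sum_eq_sum_Ico_succ_bot (Nat.succ_pos n) _
  have h5 : ∑ i ∈ Finset.Icc 1 n, ((i : ZMod Q)) ^ n
      = ∑ i ∈ Finset.range (n+1), ((i : ZMod Q)) ^ n := by
    rw [h3, Finset.range_eq_Ico, h4]
    rw [Nat.cast_zero, zero_pow hn.ne']
    ring
  have h6 : ∑ i ∈ Finset.range (n+1), ((i : ZMod Q)) ^ n
      = ∑ i ∈ Finset.range n, ((i : ZMod Q)) ^ n := by
    rw [Finset.sum_range_succ, (ZMod.natCast_eq_zero_iff n Q).mpr hQn,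
      zero_pow hn.ne', add_zero]
  rw [h2, h5, h6, ← Nat.div_mul_cancel hQn, sum_blocks, Nat.div_mul_cancel hQn]
  rw [sum_range_zmod (fun x => x ^ n)]

lemma cast_zero_of_not_isUnit {q e : ℕ} (hq : q.Prime) (he : e ≠ 0) {x : ZMod (q ^ e)}
    (hx : ¬ IsUnit x) : ZMod.castHom (dvd_pow_self q he) (ZMod q) x = 0 := by
  haveI : NeZero (q ^ e) := ⟨pow_ne_zero e hq.pos.ne'⟩
  have hxv : x = ((x.val : ℕ) : ZMod (q ^ e)) := (ZMod.natCast_rightInverse x).symm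
  have hqv : q ∣ x.val := by
    by_contra h
    refine hx ?_
    rw [hxv]
    exact (ZMod.isUnit_iff_coprime _ _).mpr (((hq.coprime_iff_not_dvd.mpr h).symm).pow_right e)
  rw [hxv, map_natCast]
  exact (ZMod.natCast_eq_zero_iff _ _).mpr hqv

lemma pow_eq_zero_of_not_isUnit {q e n : ℕ} (hq : q.Prime) (he : e ≠ 0) (hen : e ≤ n)
    {x : ZMod (q ^ e)} (hx : ¬ IsUnit x) : x ^ n = 0 := by
  haveI : NeZero (q ^ e) := ⟨pow_ne_zero e hq.pos.ne'⟩
  have hxv : x = ((x.val : ℕ) : ZMod (q ^ e)) := (ZMod.natCast_rightInverse x).symm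
  have hqv : q ∣ x.val := by
    by_contra h
    refine hx ?_
    rw [hxv]
    exact (ZMod.isUnit_iff_coprime _ _).mpr (((hq.coprime_iff_not_dvd.mpr h).symm).pow_right e)
  have hxe : x ^ e = 0 := by
    rw [hxv, ← Nat.cast_pow]
    exact (ZMod.natCast_eq_zero_iff _ _).mpr (pow_dvd_pow_of_dvd hqv e)
  calc x ^ n = x ^ e * x ^ (n - e) := by rw [← pow_add]; congr 1; omega
  _ = 0 := by rw [hxe, zero_mul]

lemma T_dvd {q e n : ℕ} (hq : q.Prime) (he : e ≠ 0) (hQn : q ^ e ∣ n) (hn : 0 < n)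
    (h1 : (q - 1) ∣ n) :
    haveI : NeZero (q ^ e) := ⟨pow_ne_zero e hq.pos.ne'⟩
    ∑ x : ZMod (q ^ e), x ^ n = ((q ^ e).totient : ZMod (q ^ e)) := by
  haveI : NeZero (q ^ e) := ⟨pow_ne_zero e hq.pos.ne'⟩
  have htot : (q ^ e).totient ∣ n := by
    rw [Nat.totient_prime_pow hq (Nat.pos_of_ne_zero he)]
    refine Nat.Coprime.mul_dvd_of_dvd_of_dvd ?_ ?_ h1
    · exact Nat.Coprime.pow_left _ (hq.coprime_iff_not_dvd.mpr (fun hcon => by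
        have h2 := hq.two_le
        have := Nat.le_of_dvd (by omega) hcon
        omega))
    · exact dvd_trans (pow_dvd_pow q (Nat.sub_le e 1)) hQn
  have hen : e ≤ n := le_trans (Nat.lt_pow_self (n := e) hq.one_lt).le (Nat.le_of_dvd hn hQn)
  have hterm : ∀ x : ZMod (q ^ e), x ^ n = if IsUnit x then 1 else 0 := by
    intro x
    by_cases hx : IsUnit x
    · rw [if_pos hx]
      obtain ⟨u, rfl⟩ := hx
      obtain ⟨c, hc⟩ := htot
      rw [hc, pow_mul, ← Units.val_pow_eq_pow_val, ZMod.pow_totient u, Units.val_one, one_pow]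
    · rw [if_neg hx]
      exact pow_eq_zero_of_not_isUnit hq he hen hx
  rw [Fintype.sum_congr _ _ hterm, Finset.sum_boole]
  congr 1
  rw [← ZMod.card_units_eq_totient (q ^ e), ← Fintype.card_subtype]
  refine (Fintype.card_congr
    ⟨fun u => ⟨(u : ZMod (q ^ e)), u.isUnit⟩, fun x => x.2.unit, ?_, ?_⟩).symm
  · intro u; exact Units.ext u.isUnit.unit_spec
  · intro x; exact Subtype.ext x.2.unit_spec

lemma T_not_dvd {q e n : ℕ} (hq : q.Prime) (he : e ≠ 0) (hn : 0 < n)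
    (h1 : ¬ (q - 1) ∣ n) :
    haveI : NeZero (q ^ e) := ⟨pow_ne_zero e hq.pos.ne'⟩
    ∑ x : ZMod (q ^ e), x ^ n = 0 := by
  haveI : NeZero (q ^ e) := ⟨pow_ne_zero e hq.pos.ne'⟩
  haveI : Fact q.Prime := ⟨hq⟩
  obtain ⟨g, hg⟩ := IsCyclic.exists_generator (α := (ZMod q)ˣ)
  have horder : orderOf g = q - 1 := by
    rw [orderOf_eq_card_of_forall_mem_zpowers hg, Nat.card_eq_fintype_card,
      ZMod.card_units_eq_totient, Nat.totient_prime hq]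
  have hgn : g ^ n ≠ 1 := by
    intro hcon
    exact h1 (horder ▸ orderOf_dvd_of_pow_eq_one hcon)
  set x : ZMod (q ^ e) := (((g : ZMod q).val : ℕ) : ZMod (q ^ e)) with hx
  set f := ZMod.castHom (dvd_pow_self q he) (ZMod q) with hf
  have hfx : f x = (g : ZMod q) := by
    rw [hx, map_natCast, ZMod.natCast_rightInverse]
  have hxu : IsUnit x := by
    by_contra h
    have := cast_zero_of_not_isUnit hq he h
    rw [← hf, hfx] at this
    exact g.ne_zero this
  have hkey : IsUnit (x ^ n - 1) := by
    by_contra h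
    have := cast_zero_of_not_isUnit hq he h
    rw [← hf, map_sub, map_pow, map_one, hfx, sub_eq_zero] at this
    exact hgn (Units.ext (by rw [Units.val_pow_eq_pow_val, this, Units.val_one]))
  obtain ⟨u, hu⟩ := hxu
  have hbij : Function.Bijective (fun y : ZMod (q ^ e) => x * y) := by
    constructor
    · intro a b hab
      simpa [← hu, ← mul_assoc]
        using congrArg (fun z => ((u⁻¹ : (ZMod (q ^ e))ˣ) : ZMod (q ^ e)) * z) hab
    · intro b
      exact ⟨((u⁻¹ : (ZMod (q ^ e))ˣ) : ZMod (q ^ e)) * b, by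
        show x * _ = b
        rw [← hu, ← mul_assoc]; simp⟩
  have hfix : x ^ n * (∑ y : ZMod (q ^ e), y ^ n) = ∑ y : ZMod (q ^ e), y ^ n := by
    rw [Finset.mul_sum]
    calc ∑ y : ZMod (q ^ e), x ^ n * y ^ n = ∑ y : ZMod (q ^ e), (x * y) ^ n := by
          refine Finset.sum_congr rfl fun y _ => ?_; rw [mul_pow]
    _ = ∑ y : ZMod (q ^ e), y ^ n := Fintype.sum_bijective _ hbij _ _ (fun y => rfl)
  have hzero : (x ^ n - 1) * (∑ y : ZMod (q ^ e), y ^ n) = 0 := by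
    rw [sub_mul, one_mul, hfix, sub_self]
  obtain ⟨v, hv⟩ := hkey
  calc ∑ y : ZMod (q ^ e), y ^ n
      = ((v⁻¹ : (ZMod (q ^ e))ˣ) : ZMod (q ^ e)) * ((x ^ n - 1) * ∑ y : ZMod (q ^ e), y ^ n) := by
        rw [← hv, ← mul_assoc]; simp
  _ = 0 := by rw [hzero, mul_zero]

/-! ### The local structure of `n` at each prime -/

lemma cast_p_zero {p q m : ℕ} (hp : p.Prime) (hq : q.Prime) (h : (p : ZMod (q ^ m)) = 0)
    (hm : m ≠ 0) : q = p := by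
  haveI : NeZero (q ^ m) := ⟨pow_ne_zero m hq.pos.ne'⟩
  have : q ^ m ∣ p := (ZMod.natCast_eq_zero_iff _ _).mp h
  exact (Nat.prime_dvd_prime_iff_eq hq hp).mp ((dvd_pow_self q hm).trans this)

lemma localA {p n q : ℕ} (hp : p.Prime) (hq : q.Prime) (hn : 0 < n) (hdvd : q ∣ n)
    (hmod : S n n ≡ p [MOD n]) (hqp : q ≠ p) :
    n.factorization q = 1 ∧ (q - 1) ∣ n := by
  set e := n.factorization q with he
  have he1 : 1 ≤ e := hq.factorization_pos_of_dvd hn.ne' hdvd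
  haveI : NeZero (q ^ e) := ⟨pow_ne_zero e hq.pos.ne'⟩
  have hQn : q ^ e ∣ n := he ▸ Nat.ordProj_dvd n q
  have hco := core (p := p) (q := q) hn he hmod
  by_cases h1 : (q - 1) ∣ n
  · refine ⟨?_, h1⟩
    by_contra hcon
    have he2 : 2 ≤ e := by omega
    rw [T_dvd hq (by omega) hQn hn h1] at hco
    have hfco := congrArg (ZMod.castHom (dvd_pow_self q (by omega : e ≠ 0)) (ZMod q)) hco
    rw [map_natCast, map_mul, map_natCast, map_natCast] at hfco
    have htot0 : (((q ^ e).totient : ℕ) : ZMod q) = 0 := by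
      rw [Nat.totient_prime_pow hq (by omega)]
      refine (ZMod.natCast_eq_zero_iff _ _).mpr ?_
      exact dvd_mul_of_dvd_left (dvd_pow_self q (by omega)) _
    rw [htot0, mul_zero] at hfco
    exact hqp (cast_p_zero hp hq (m := 1) (by rw [pow_one]; exact hfco) one_ne_zero)
  · exfalso
    rw [T_not_dvd hq (by omega) hn h1, mul_zero] at hco
    exact hqp (cast_p_zero hp hq hco (by omega))

lemma localB {p n : ℕ} (hp : p.Prime) (hn : 0 < n) (hdvd : p ∣ n)
    (hmod : S n n ≡ p [MOD n]) :
    n.factorization p ≤ 2 ∧ (n.factorization p = 2 → (p - 1) ∣ n) := by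
  set e := n.factorization p with he
  have he1 : 1 ≤ e := hp.factorization_pos_of_dvd hn.ne' hdvd
  haveI : NeZero (p ^ e) := ⟨pow_ne_zero e hp.pos.ne'⟩
  have hQn : p ^ e ∣ n := he ▸ Nat.ordProj_dvd n p
  have hco := core (p := p) (q := p) hn he hmod
  by_cases h1 : (p - 1) ∣ n
  · refine ⟨?_, fun _ => h1⟩
    by_contra hcon
    have he3 : 3 ≤ e := by omega
    rw [T_dvd hp (by omega) hQn hn h1] at hco
    have hfco := congrArg (ZMod.castHom (pow_dvd_pow p (by omega : 2 ≤ e)) (ZMod (p ^ 2))) hco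
    rw [map_natCast, map_mul, map_natCast, map_natCast] at hfco
    have htot0 : (((p ^ e).totient : ℕ) : ZMod (p ^ 2)) = 0 := by
      rw [Nat.totient_prime_pow hp (by omega)]
      refine (ZMod.natCast_eq_zero_iff _ _).mpr ?_
      exact dvd_mul_of_dvd_left (pow_dvd_pow p (by omega)) _
    rw [htot0, mul_zero] at hfco
    haveI : NeZero (p ^ 2) := ⟨pow_ne_zero 2 hp.pos.ne'⟩
    have h2 : p ^ 2 ∣ p ^ 1 := by
      rw [pow_one]
      exact (ZMod.natCast_eq_zero_iff _ _).mp hfco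
    have := (Nat.pow_dvd_pow_iff_le_right hp.one_lt).mp h2
    omega
  · have : e = 1 := by
      rw [T_not_dvd hp (by omega) hn h1, mul_zero] at hco
      have h2 : p ^ e ∣ p ^ 1 := by
        rw [pow_one]
        exact (ZMod.natCast_eq_zero_iff _ _).mp hco
      have := (Nat.pow_dvd_pow_iff_le_right hp.one_lt).mp h2
      omega
    omega

end Stmt12Aux

open Stmt12Aux in
/-- If `p ∉ {2, 3, 7, 43}` is a prime and none of `1 + 2p, 1 + 6p, 1 + 14p, 1 + 42p,
1 + 86p, 1 + 258p, 1 + 602p, 1 + 1806p` is prime, then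
`M_p ⊆ M_1 ∪ p·M_1` where `M_1 = {1, 2, 6, 42, 1806}`; in particular `M_p` is finite. -/
theorem stmt_12 (p : ℕ) (hp : p.Prime) (hne : p ∉ ({2, 3, 7, 43} : Set ℕ))
    (hnp : ∀ k ∈ ({2, 6, 14, 42, 86, 258, 602, 1806} : Finset ℕ),
      ¬ Nat.Prime (1 + k * p)) :
    {n : ℕ | 0 < n ∧ S n n ≡ p [MOD n]} ⊆
        ({1, 2, 6, 42, 1806} : Set ℕ) ∪
          (fun x => p * x) '' ({1, 2, 6, 42, 1806} : Set ℕ) ∧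
      {n : ℕ | 0 < n ∧ S n n ≡ p [MOD n]}.Finite := by
  have hp2 : p ≠ 2 := by
    intro h
    exact hne (by rw [h]; simp)
  have hincl : {n : ℕ | 0 < n ∧ S n n ≡ p [MOD n]} ⊆
      ({1, 2, 6, 42, 1806} : Set ℕ) ∪
        (fun x => p * x) '' ({1, 2, 6, 42, 1806} : Set ℕ) := by
    rintro n ⟨hn, hmod⟩
    have hle1 : ∀ r, r ≠ p → n.factorization r ≤ 1 := by
      intro r hr
      by_cases hrp : r.Prime
      · by_cases hrd : r ∣ n
        · exact (localA hp hrp hn hrd hmod hr).1.le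
        · simp [Nat.factorization_eq_zero_of_not_dvd hrd]
      · simp [Nat.factorization_eq_zero_of_not_prime _ hrp]
    have hvle : n.factorization p ≤ 2 := by
      by_cases hpd : p ∣ n
      · exact (localB hp hn hpd hmod).1
      · simp [Nat.factorization_eq_zero_of_not_dvd hpd]
    rcases (show n.factorization p = 0 ∨ n.factorization p = 1 ∨ n.factorization p = 2 from
      by omega) with hv | hv | hv
    · -- `p ∤ n` : `n` itself is in the chain
      have hpn : ¬ p ∣ n := by
        intro h
        have := hp.factorization_pos_of_dvd hn.ne' h
        omega
      have hsqn : Squarefree n := by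
        refine (Nat.squarefree_iff_factorization_le_one hn.ne').mpr fun r => ?_
        by_cases hr : r = p
        · subst hr; omega
        · exact hle1 r hr
      have hyp : ∀ q, q.Prime → q ∣ n → (q - 1) ∣ p * n := by
        intro q hq hqd
        have hqp : q ≠ p := by
          intro h
          exact hpn (h ▸ hqd)
        exact ((localA hp hq hn hqd hmod hqp).2).mul_left p
      have hmem := chain hp hp2 hnp n hn hsqn hpn hyp
      exact Set.mem_union_left _ (by simpa using hmem)
    · -- `p ∥ n` : `n / p` is in the chain
      have hpd : p ∣ n := (hp.dvd_iff_one_le_factorization hn.ne').mpr (by omega)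
      obtain ⟨m, hm⟩ : ∃ m, n = p * m := ⟨n / p, (Nat.mul_div_cancel' hpd).symm⟩
      have hm0 : 0 < m := by
        rcases Nat.eq_zero_or_pos m with h | h
        · subst h; omega
        · exact h
      have hmdvd : m ∣ n := ⟨p, by rw [hm]; ring⟩
      have hsqn : Squarefree n := by
        refine (Nat.squarefree_iff_factorization_le_one hn.ne').mpr fun r => ?_
        by_cases hr : r = p
        · subst hr; omega
        · exact hle1 r hr
      have hsqm : Squarefree m := hsqn.squarefree_of_dvd hmdvd
      have hpm : ¬ p ∣ m := by
        rintro ⟨t, rfl⟩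
        have hsq : p ^ 2 ∣ n := by
          rw [hm, pow_two]
          exact ⟨t, by ring⟩
        have := (hp.pow_dvd_iff_le_factorization hn.ne').mp hsq
        omega
      have hyp : ∀ q, q.Prime → q ∣ m → (q - 1) ∣ p * m := by
        intro q hq hqd
        have hqn : q ∣ n := hqd.trans hmdvd
        have hqp : q ≠ p := by
          intro h
          exact hpm (h ▸ hqd)
        have := (localA hp hq hn hqn hmod hqp).2
        rwa [hm] at this
      have hmem := chain hp hp2 hnp m hm0 hsqm hpm hyp
      refine Set.mem_union_right _ ⟨m, by simpa using hmem, hm.symm⟩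
    · -- `p^2 ∥ n` : impossible
      exfalso
      have hpd : p ∣ n := (hp.dvd_iff_one_le_factorization hn.ne').mpr (by omega)
      have hp1n : (p - 1) ∣ n := (localB hp hn hpd hmod).2 hv
      set m := ordCompl[p] n with hmdef
      have hmne : m ≠ 0 := (Nat.ordCompl_pos p hn.ne').ne'
      have hmdvd : m ∣ n := Nat.ordCompl_dvd n p
      have hpm : ¬ p ∣ m := Nat.not_dvd_ordCompl hp hn.ne'
      have hfm : m.factorization = n.factorization.erase p := Nat.factorization_ordCompl n p
      have hsqm : Squarefree m := by
        refine (Nat.squarefree_iff_factorization_le_one hmne).mpr fun r => ?_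
        rw [hfm]
        by_cases hr : r = p
        · subst hr; simp [Finsupp.erase_same]
        · rw [Finsupp.erase_ne hr]
          exact hle1 r hr
      set mf := ∏ r ∈ m.primeFactors.filter (fun r => r < p), r with hmfdef
      have hmfdvdm : mf ∣ m :=
        Finset.prod_primes_dvd m
          (fun r hr => ((Nat.mem_primeFactors.mp (Finset.mem_filter.mp hr).1).1).prime)
          (fun r hr => (Nat.mem_primeFactors.mp (Finset.mem_filter.mp hr).1).2.1)
      have hmf0 : 0 < mf := Nat.pos_of_ne_zero (fun h => hmne (by
        rcases hmfdvdm with ⟨t, ht⟩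
        rw [h, zero_mul] at ht
        exact ht))
      have hsqmf : Squarefree mf := hsqm.squarefree_of_dvd hmfdvdm
      have hpmf : ¬ p ∣ mf := fun h => hpm (h.trans hmfdvdm)
      have keydvd : ∀ r, 2 ≤ r → r ≤ p → (r - 1) ∣ n → (r - 1) ∣ mf := by
        intro r hr2 hrp hrd
        have hr10 : r - 1 ≠ 0 := by omega
        have hp2' := hp.two_le
        have hsq1 : Squarefree (r - 1) := by
          refine (Nat.squarefree_iff_factorization_le_one hr10).mpr fun s => ?_
          by_cases hs : s = p
          · rw [hs]
            have hnd : ¬ p ∣ (r - 1) := by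
              intro h
              have := Nat.le_of_dvd (by omega) h
              omega
            simp [Nat.factorization_eq_zero_of_not_dvd hnd]
          · calc (r - 1).factorization s ≤ n.factorization s :=
                  Finsupp.le_def.mp ((Nat.factorization_le_iff_dvd hr10 hn.ne').mpr hrd) s
            _ ≤ 1 := hle1 s hs
        have hprimes : ∀ s, s.Prime → s ∣ (r - 1) → s ∣ mf := by
          intro s hsp hsd
          have hsn : s ∣ n := hsd.trans hrd
          have hsltp : s < p := by
            have := Nat.le_of_dvd (by omega) hsd
            omega
          have hsnep : s ≠ p := by omega
          have hsm : s ∣ m := by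
            refine (hsp.dvd_iff_one_le_factorization hmne).mpr ?_
            rw [hfm, Finsupp.erase_ne hsnep]
            exact hsp.factorization_pos_of_dvd hn.ne' hsn
          exact Finset.dvd_prod_of_mem _
            (Finset.mem_filter.mpr ⟨Nat.mem_primeFactors.mpr ⟨hsp, hsm, hmne⟩, hsltp⟩)
        rw [← Nat.prod_primeFactors_of_squarefree hsq1]
        exact Finset.prod_primes_dvd mf
          (fun s hs => (Nat.mem_primeFactors.mp hs).1.prime)
          (fun s hs => hprimes s (Nat.mem_primeFactors.mp hs).1 (Nat.mem_primeFactors.mp hs).2.1)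
      have hypmf : ∀ q, q.Prime → q ∣ mf → (q - 1) ∣ p * mf := by
        intro q hq hqd
        obtain ⟨r, hr, hqr⟩ := hq.prime.exists_mem_finset_dvd hqd
        obtain ⟨hrm, hrlt⟩ := Finset.mem_filter.mp hr
        have hrp : r.Prime := (Nat.mem_primeFactors.mp hrm).1
        have hqeq : q = r := (Nat.prime_dvd_prime_iff_eq hq hrp).mp hqr
        subst hqeq
        have hqn : q ∣ n := (Nat.mem_primeFactors.mp hrm).2.1.trans hmdvd
        have h1 := (localA hp hq hn hqn hmod (by omega)).2
        exact (keydvd q hq.two_le (by omega) h1).mul_left p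
      have hmfM := chain hp hp2 hnp mf hmf0 hsqmf hpmf hypmf
      have hp1mf : (p - 1) ∣ mf := keydvd p hp.two_le le_rfl hp1n
      have hpmem := prime_of_sub_one_mem hp (mem_d1806 hmfM hp1mf)
      have : p = 2 ∨ p = 3 ∨ p = 7 ∨ p = 43 := by simpa using hpmem
      refine hne ?_
      rcases this with h | h | h | h <;> (rw [h]; simp)
  refine ⟨hincl, Set.Finite.subset ?_ hincl⟩
  have h1 : ({1, 2, 6, 42, 1806} : Set ℕ).Finite := by
    repeat apply Set.Finite.insert
    exact Set.finite_singleton _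
  exact h1.union (h1.image _)
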